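/- arXiv:2407.16967 — 2 statements merged into one kernel-verified Lean document; each statement's English description precedes it below -/
import Mathlib

section
/- Let μ be the period-3 measure on 2^ℕ (marginals m_n({1}) = 2/3 if 3 ∣ n, m_n({1}) = 1/3 otherwise). For x ∈ 2^ℕ with infinitely many 1s, let n_0(x) < n_1(x) < ⋯ enumerate {n : x(n) = 1}, let r(n) = 1/2 if 3 ∣ n and r(n) = 2 otherwise, and set C_k(x) = ∏_{i=0}^{k−1} r(n_i(x)). Then for μ-almost every x ∈ 2^ℕ, x has infinitely many 1s and limsup_{k→∞} C_k(x) = +∞ and liminf_{k→∞} C_k(x) = 0; that is, the Radon–Nikodym cocycle oscillates along the forward geodesic of the least-deletion map. -/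
open MeasureTheory Filter Set ENNReal

/-- `μ` is the product of the marginal measures `m n` on `Bool`. -/
def IsProductMeasure (μ : Measure (ℕ → Bool)) (m : ℕ → Measure Bool) : Prop :=
  ∀ (s : Finset ℕ) (a : ℕ → Bool),
    μ {x | ∀ n ∈ s, x n = a n} = ∏ n ∈ s, m n {a n}

/-- The multiplicative jump `m n {0} / m n {1}` of the period-3 measure. -/
noncomputable def r3 (n : ℕ) : ℝ≥0∞ := if 3 ∣ n then 1 / 2 else 2

/-- The cocycle sequence of `x` along the forward geodesic of the least-deletion map:
`C k x = ∏_{i<k} r (nᵢ x)`, where `n₀ x < n₁ x < ⋯` (given by `Nat.nth`) enumerates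
`{n | x n = 1}`. -/
noncomputable def cocycle3 (k : ℕ) (x : ℕ → Bool) : ℝ≥0∞ :=
  ∏ i ∈ Finset.range k, r3 (Nat.nth (fun n => x n = true) i)

namespace Period3Aux

open ProbabilityTheory
open scoped NNReal Topology

/-! ### Coordinate σ-algebras -/

def coordSet (n : ℕ) : Set (ℕ → Bool) := {x | x n = true}

lemma measurableSet_coordSet (n : ℕ) : MeasurableSet (coordSet n) := by
  have h : coordSet n = (fun x : ℕ → Bool => x n) ⁻¹' {true} := rfl
  rw [h]
  exact (measurable_pi_apply n) (measurableSet_singleton true)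

def coordMS (n : ℕ) : MeasurableSpace (ℕ → Bool) :=
  MeasurableSpace.comap (fun x => x n) inferInstance

lemma coordMS_le (n : ℕ) : coordMS n ≤ (inferInstance : MeasurableSpace (ℕ → Bool)) :=
  measurable_iff_comap_le.1 (measurable_pi_apply n)

lemma bool_measurableSet (t : Set Bool) :
    MeasurableSet[MeasurableSpace.generateFrom {({true} : Set Bool)}] t := by
  classical
  have htrue : MeasurableSet[MeasurableSpace.generateFrom {({true} : Set Bool)}]
      ({true} : Set Bool) := MeasurableSpace.measurableSet_generateFrom rfl
  have hfalse : MeasurableSet[MeasurableSpace.generateFrom {({true} : Set Bool)}]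
      ({false} : Set Bool) := by
    have h : ({false} : Set Bool) = ({true} : Set Bool)ᶜ := by
      ext b; cases b <;> simp
    rw [h]
    exact htrue.compl
  have hdec : t = (if true ∈ t then ({true} : Set Bool) else ∅)
      ∪ (if false ∈ t then ({false} : Set Bool) else ∅) := by
    ext b
    cases b <;> by_cases h1 : true ∈ t <;> by_cases h0 : false ∈ t <;>
      simp [h1, h0]
  rw [hdec]
  refine MeasurableSet.union ?_ ?_ <;> split_ifs <;>
    first
      | exact htrue
      | exact hfalse
      | exact @MeasurableSet.empty _ (MeasurableSpace.generateFrom {({true} : Set Bool)})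

lemma bool_ms_eq : (inferInstance : MeasurableSpace Bool)
    = MeasurableSpace.generateFrom {({true} : Set Bool)} := by
  refine le_antisymm ?_ ?_
  · rw [MeasurableSpace.le_def]
    intro t _
    exact bool_measurableSet t
  · exact MeasurableSpace.generateFrom_le fun s _ => MeasurableSpace.measurableSet_top

lemma coordMS_eq (n : ℕ) :
    coordMS n = MeasurableSpace.generateFrom {coordSet n} := by
  rw [coordMS, bool_ms_eq, MeasurableSpace.comap_generateFrom, Set.image_singleton]
  rfl

section

variable {m : ℕ → Measure Bool} {μ : Measure (ℕ → Bool)}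

lemma isProb (hμ : IsProductMeasure μ m) : IsProbabilityMeasure μ := by
  constructor
  have h := hμ ∅ (fun _ => true)
  simpa using h

lemma meas_coord (hμ : IsProductMeasure μ m) (n : ℕ) : μ (coordSet n) = m n {true} := by
  have h := hμ {n} (fun _ => true)
  simpa [coordSet] using h

lemma indep_coords (hμ : IsProductMeasure μ m) : iIndep coordMS μ := by
  refine iIndepSets.iIndep coordMS_le (fun n => {coordSet n}) (fun n => ?_)
    (fun n => coordMS_eq n) ?_
  · intro t ht u hu _
    rw [Set.mem_singleton_iff] at ht hu
    subst ht; subst hu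
    rw [Set.inter_self]
    exact rfl
  · rw [iIndepSets_iff]
    intro s f hf
    have hfe : ∀ i ∈ s, f i = coordSet i := fun i hi => by
      have := hf i hi; rwa [Set.mem_singleton_iff] at this
    have hset : (⋂ i ∈ s, f i) = {x : ℕ → Bool | ∀ n ∈ s, x n = true} := by
      ext x
      simp only [Set.mem_iInter, Set.mem_setOf_eq]
      constructor
      · intro h n hn
        have := h n hn; rwa [hfe n hn] at this
      · intro h n hn
        rw [hfe n hn]; exact h n hn
    rw [hset, hμ s (fun _ => true)]
    exact Finset.prod_congr rfl fun i hi => by rw [hfe i hi, meas_coord hμ i]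

/-! ### The filtration -/

def filt : Filtration ℕ (inferInstance : MeasurableSpace (ℕ → Bool)) where
  seq k := ⨆ i ∈ {i : ℕ | i < k}, coordMS i
  mono' := fun i j hij => biSup_mono fun n hn => lt_of_lt_of_le hn hij
  le' := fun _ => iSup₂_le fun i _ => coordMS_le i

lemma indep_coordMS_filt (hμ : IsProductMeasure μ m) {k n : ℕ} (hkn : k ≤ n) :
    Indep (coordMS n) (filt k) μ := by
  have h := indep_biSup_compl coordMS_le (indep_coords hμ) {i : ℕ | i < k}
  refine indep_of_indep_of_le_left h.symm ?_
  exact le_biSup _ (show n ∈ {i : ℕ | i < k}ᶜ from fun hn => absurd hn (by simpa using hkn))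

/-! ### The centered random walk -/

noncomputable def eR (n : ℕ) : ℝ := if 3 ∣ n then -1 else 1

noncomputable def cR (n : ℕ) : ℝ := if 3 ∣ n then -(2/3) else 1/3

noncomputable def gg (n : ℕ) (x : ℕ → Bool) : ℝ := (if x n = true then eR n else 0) - cR n

noncomputable def VV (k : ℕ) (x : ℕ → Bool) : ℝ := ∑ n ∈ Finset.range k, gg n x

lemma gg_sm (n : ℕ) : StronglyMeasurable[coordMS n] (gg n) := by
  have h1 : Measurable[coordMS n] fun x : ℕ → Bool => x n := measurable_iff_comap_le.2 le_rfl
  have h2 : gg n = (fun b : Bool => (if b = true then eR n else 0) - cR n) ∘ fun x => x n := rfl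
  rw [h2]
  exact (measurable_from_top.comp h1).stronglyMeasurable

lemma gg_bdd (n : ℕ) (x : ℕ → Bool) : |gg n x| ≤ 2 := by
  by_cases h3 : 3 ∣ n <;> by_cases hx : x n = true <;>
    simp [gg, eR, cR, h3, hx] <;> norm_num [abs_le]

lemma gg_lb (n : ℕ) (x : ℕ → Bool) : 1/3 ≤ |gg n x| := by
  by_cases h3 : 3 ∣ n <;> by_cases hx : x n = true <;>
    simp [gg, eR, cR, h3, hx] <;> norm_num [le_abs]

lemma gg_indicator (n : ℕ) :
    gg n = fun x => (coordSet n).indicator (fun _ => eR n) x - cR n := by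
  funext x
  simp [gg, Set.indicator_apply, coordSet]

lemma gg_int [IsProbabilityMeasure μ] (n : ℕ) : Integrable (gg n) μ := by
  rw [gg_indicator]
  exact ((integrable_const (eR n)).indicator (measurableSet_coordSet n)).sub (integrable_const _)

lemma gg_integral (hμ : IsProductMeasure μ m)
    (hm : ∀ n, m n {true} = if 3 ∣ n then (2 : ℝ≥0∞) / 3 else 1 / 3) (n : ℕ) :
    ∫ x, gg n x ∂μ = 0 := by
  haveI := isProb hμ
  have h1 : ∫ x, gg n x ∂μ = (μ (coordSet n)).toReal • eR n - cR n := by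
    rw [gg_indicator]
    rw [integral_sub ((integrable_const (eR n)).indicator (measurableSet_coordSet n))
      (integrable_const _)]
    rw [integral_indicator_const _ (measurableSet_coordSet n), integral_const]
    simp [measure_univ, measureReal_def]
  rw [h1, meas_coord hμ n, hm n]
  by_cases h3 : 3 ∣ n <;>
    simp [h3, eR, cR, ENNReal.toReal_div] <;> norm_num

lemma VV_sm (k : ℕ) : StronglyMeasurable[filt k] (VV k) := by
  have h : Measurable[filt k] (VV k) := by
    refine Finset.measurable_sum (Finset.range k) fun n hn => ?_
    have hle : coordMS n ≤ filt k := le_biSup _ (Finset.mem_range.1 hn)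
    exact (gg_sm n).measurable.le hle
  exact h.stronglyMeasurable

lemma VV_int [IsProbabilityMeasure μ] (k : ℕ) : Integrable (VV k) μ :=
  integrable_finset_sum _ fun n _ => gg_int n

lemma eventuallyEq_sum_zero {s : Finset ℕ} {F : ℕ → (ℕ → Bool) → ℝ}
    (h : ∀ n ∈ s, F n =ᵐ[μ] 0) : (∑ n ∈ s, F n) =ᵐ[μ] 0 := by
  have h' : ∀ᵐ x ∂μ, ∀ n ∈ s, F n x = 0 := by
    rw [Filter.eventually_all_finset]
    intro n hn
    filter_upwards [h n hn] with x hx using hx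
  filter_upwards [h'] with x hx
  rw [Finset.sum_apply]
  exact Finset.sum_eq_zero fun n hn => hx n hn

lemma VV_mart (hμ : IsProductMeasure μ m)
    (hm : ∀ n, m n {true} = if 3 ∣ n then (2 : ℝ≥0∞) / 3 else 1 / 3) :
    Martingale VV filt μ := by
  haveI := isProb hμ
  refine ⟨fun k => VV_sm k, fun i j hij => ?_⟩
  have hsplit : VV j = VV i + ∑ n ∈ Finset.Ico i j, gg n := by
    funext x
    rw [Pi.add_apply, Finset.sum_apply]
    exact (Finset.sum_range_add_sum_Ico (fun n => gg n x) hij).symm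
  rw [hsplit]
  have hGint : Integrable (∑ n ∈ Finset.Ico i j, gg n) μ :=
    integrable_finset_sum' _ fun n _ => gg_int n
  refine (condExp_add (VV_int i) hGint (filt i)).trans ?_
  have h2 : μ[VV i|filt i] = VV i :=
    condExp_of_stronglyMeasurable (filt.le i) (VV_sm i) (VV_int i)
  have h3 : μ[(∑ n ∈ Finset.Ico i j, gg n)|filt i] =ᵐ[μ] ∑ n ∈ Finset.Ico i j, μ[gg n|filt i] :=
    condExp_finset_sum (fun n _ => gg_int n) (filt i)
  have h4 : (∑ n ∈ Finset.Ico i j, μ[gg n|filt i]) =ᵐ[μ] 0 := by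
    refine eventuallyEq_sum_zero fun n hn => ?_
    have hn' : i ≤ n := (Finset.mem_Ico.1 hn).1
    have h5 := condExp_indep_eq (coordMS_le n) (filt.le i) (gg_sm n)
      (indep_coordMS_filt hμ hn')
    refine h5.trans ?_
    rw [gg_integral hμ hm n]
    rfl
  have h6 : μ[VV i|filt i] + μ[(∑ n ∈ Finset.Ico i j, gg n)|filt i] =ᵐ[μ] VV i := by
    rw [h2]
    filter_upwards [h3.trans h4] with x hx
    rw [Pi.add_apply, hx, Pi.zero_apply, add_zero]
  exact h6

/-! ### A.e. unboundedness of the walk -/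

lemma ae_unbounded (hμ : IsProductMeasure μ m)
    (hm : ∀ n, m n {true} = if 3 ∣ n then (2 : ℝ≥0∞) / 3 else 1 / 3) :
    ∀ᵐ x ∂μ, ¬BddAbove (Set.range fun k => VV k x) ∧
      ¬BddBelow (Set.range fun k => VV k x) := by
  haveI := isProb hμ
  have hbdd : ∀ᵐ x ∂μ, ∀ i, |VV (i+1) x - VV i x| ≤ ((2 : ℝ≥0) : ℝ) := by
    refine ae_of_all _ fun x i => ?_
    have h : VV (i+1) x - VV i x = gg i x := by
      simp [VV, Finset.sum_range_succ]
    rw [h]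
    simpa using gg_bdd i x
  have h1 := (VV_mart hμ hm).submartingale.bddAbove_iff_exists_tendsto hbdd
  have h2 := (VV_mart hμ hm).bddAbove_range_iff_bddBelow_range hbdd
  filter_upwards [h1, h2] with x hx1 hx2
  have hnc : ¬∃ c, Tendsto (fun k => VV k x) atTop (𝓝 c) := by
    rintro ⟨c, hc⟩
    have hc1 : Tendsto (fun k => VV (k+1) x) atTop (𝓝 c) :=
      hc.comp (tendsto_add_atTop_nat 1)
    have hd : Tendsto (fun k => |VV (k+1) x - VV k x|) atTop (𝓝 0) := by
      have h0 := (hc1.sub hc)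
      rw [sub_self] at h0
      simpa using h0.abs
    have hev : ∀ᶠ k in atTop, |VV (k+1) x - VV k x| < 1/3 :=
      hd.eventually (gt_mem_nhds (by norm_num : (0:ℝ) < 1/3))
    obtain ⟨k, hk⟩ := hev.exists
    have hlb := gg_lb k x
    have heq : VV (k+1) x - VV k x = gg k x := by
      simp [VV, Finset.sum_range_succ]
    rw [heq] at hk
    linarith
  constructor
  · exact fun hb => hnc (hx1.1 hb)
  · exact fun hb => hnc (hx1.1 (hx2.2 hb))

/-! ### A.e. infinitely many ones -/

lemma m_false_le (hprob : ∀ n, IsProbabilityMeasure (m n))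
    (hm : ∀ n, m n {true} = if 3 ∣ n then (2 : ℝ≥0∞) / 3 else 1 / 3) (n : ℕ) :
    m n {false} ≤ 2/3 := by
  haveI := hprob n
  have h1 : ({false} : Set Bool) = {true}ᶜ := by
    ext b; cases b <;> simp
  rw [h1, measure_compl (measurableSet_singleton _) (measure_ne_top _ _), measure_univ]
  rw [tsub_le_iff_right]
  have h2 : (1:ℝ≥0∞)/3 ≤ m n {true} := by
    rw [hm n]
    split_ifs
    · exact ENNReal.div_le_div_right (by norm_num) 3
    · exact le_rfl
  calc (1:ℝ≥0∞) = 2/3 + 1/3 := by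
        rw [← ENNReal.add_div]
        norm_num
        rw [ENNReal.div_self (by norm_num) (by norm_num)]
    _ ≤ 2/3 + m n {true} := by gcongr

lemma ae_infinite (hprob : ∀ n, IsProbabilityMeasure (m n))
    (hm : ∀ n, m n {true} = if 3 ∣ n then (2 : ℝ≥0∞) / 3 else 1 / 3)
    (hμ : IsProductMeasure μ m) :
    ∀ᵐ x ∂μ, {n : ℕ | x n = true}.Infinite := by
  have key : ∀ N : ℕ, μ {x : ℕ → Bool | ∀ n, N ≤ n → x n = false} = 0 := by
    intro N
    have hk : ∀ k : ℕ, μ {x : ℕ → Bool | ∀ n, N ≤ n → x n = false} ≤ (2/3 : ℝ≥0∞)^k := by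
      intro k
      have hsub : {x : ℕ → Bool | ∀ n, N ≤ n → x n = false} ⊆
          {x : ℕ → Bool | ∀ n ∈ Finset.Ico N (N+k), x n = (fun _ => false) n} :=
        fun x hx n hn => hx n (Finset.mem_Ico.1 hn).1
      refine (measure_mono hsub).trans ?_
      rw [hμ (Finset.Ico N (N+k)) (fun _ => false)]
      calc ∏ n ∈ Finset.Ico N (N+k), m n {false}
          ≤ ∏ _n ∈ Finset.Ico N (N+k), (2/3 : ℝ≥0∞) :=
            Finset.prod_le_prod' fun n _ => m_false_le hprob hm n
        _ = (2/3 : ℝ≥0∞)^k := by rw [Finset.prod_const, Nat.card_Ico]; congr 1; omega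
    have htend : Tendsto (fun k : ℕ => (2/3 : ℝ≥0∞)^k) atTop (𝓝 0) :=
      ENNReal.tendsto_pow_atTop_nhds_zero_of_lt_one (by
        rw [ENNReal.div_lt_iff (by norm_num) (by norm_num)]
        norm_num)
    exact le_antisymm (ge_of_tendsto' htend hk) zero_le
  have hsub2 : {x : ℕ → Bool | ¬ {n : ℕ | x n = true}.Infinite} ⊆
      ⋃ N : ℕ, {x : ℕ → Bool | ∀ n, N ≤ n → x n = false} := by
    intro x hx
    rw [Set.mem_setOf_eq, Set.not_infinite] at hx
    obtain ⟨N, hN⟩ := hx.bddAbove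
    refine Set.mem_iUnion.2 ⟨N+1, fun n hn => ?_⟩
    by_contra hcon
    have hxn : x n = true := by
      cases h : x n
      · exact absurd h hcon
      · rfl
    have := hN hxn
    omega
  rw [ae_iff]
  refine le_antisymm ?_ zero_le
  calc μ {x : ℕ → Bool | ¬ {n : ℕ | x n = true}.Infinite}
      ≤ μ (⋃ N : ℕ, {x : ℕ → Bool | ∀ n, N ≤ n → x n = false}) := measure_mono hsub2
    _ = 0 := measure_iUnion_null key

/-! ### Combinatorial glue -/

lemma sum_cR (N : ℕ) : ∑ n ∈ Finset.range (3*N), cR n = 0 := by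
  induction N with
  | zero => simp
  | succ N ih =>
    have h : 3*(N+1) = (3*N) + 1 + 1 + 1 := by ring
    rw [h, Finset.sum_range_succ, Finset.sum_range_succ, Finset.sum_range_succ, ih]
    have h0 : (3:ℕ) ∣ 3*N := ⟨N, rfl⟩
    have h1 : ¬ (3:ℕ) ∣ 3*N+1 := by omega
    have h2 : ¬ (3:ℕ) ∣ 3*N+1+1 := by omega
    simp [cR, h0, h1, h2]
    norm_num

def DD (N : ℕ) (x : ℕ → Bool) : ℤ :=
  ∑ n ∈ Finset.range (3*N), (if x n = true then (if 3 ∣ n then (-1:ℤ) else 1) else 0)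

lemma VV_checkpoint (N : ℕ) (x : ℕ → Bool) : VV (3*N) x = ((DD N x : ℤ) : ℝ) := by
  unfold VV DD gg
  rw [Finset.sum_sub_distrib, sum_cR, sub_zero, Int.cast_sum]
  refine Finset.sum_congr rfl fun n _ => ?_
  by_cases hx : x n = true <;> by_cases h3 : 3 ∣ n <;> simp [hx, h3, eR]

lemma prod_zpow_two (s : Finset ℕ) (f : ℕ → ℤ) :
    ∏ n ∈ s, (2:ℝ≥0∞) ^ (f n) = (2:ℝ≥0∞) ^ (∑ n ∈ s, f n) := by
  classical
  induction s using Finset.induction_on with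
  | empty => simp
  | insert _ _ ha ih =>
    rw [Finset.prod_insert ha, Finset.sum_insert ha, ih,
      ENNReal.zpow_add two_ne_zero ENNReal.ofNat_ne_top]

lemma r3_eq (n : ℕ) : r3 n = (2:ℝ≥0∞) ^ (if 3 ∣ n then (-1:ℤ) else 1) := by
  unfold r3
  split_ifs
  · rw [show ((-1:ℤ)) = Int.negSucc 0 from rfl, zpow_negSucc]
    rw [pow_one, one_div]
  · rw [zpow_one]

lemma cocycle_checkpoint (x : ℕ → Bool) (hx : {n : ℕ | x n = true}.Infinite) (N : ℕ) :
    cocycle3 (Nat.count (fun n => x n = true) (3*N)) x = (2:ℝ≥0∞) ^ (DD N x) := by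
  classical
  unfold cocycle3
  have hbij : ∏ i ∈ Finset.range (Nat.count (fun n => x n = true) (3*N)),
        r3 (Nat.nth (fun n => x n = true) i)
      = ∏ n ∈ (Finset.range (3*N)).filter (fun n => x n = true), r3 n := by
    refine Finset.prod_bij' (fun i _ => Nat.nth (fun n => x n = true) i)
      (fun n _ => Nat.count (fun n => x n = true) n) ?_ ?_ ?_ ?_ ?_
    · intro a ha
      rw [Finset.mem_filter, Finset.mem_range]
      refine ⟨?_, Nat.nth_mem_of_infinite hx a⟩
      by_contra hcon
      push_neg at hcon
      have h1 := Nat.count_monotone (fun n => x n = true) hcon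
      rw [Nat.count_nth_of_infinite hx] at h1
      exact absurd (Finset.mem_range.1 ha) (by omega)
    · intro a ha
      rw [Finset.mem_filter, Finset.mem_range] at ha
      show Nat.count (fun n => x n = true) a
        ∈ Finset.range (Nat.count (fun n => x n = true) (3*N))
      rw [Finset.mem_range]
      have h1 : Nat.count (fun n => x n = true) (a+1)
          ≤ Nat.count (fun n => x n = true) (3*N) :=
        Nat.count_monotone _ (by omega)
      rw [Nat.count_succ, if_pos ha.2] at h1
      omega
    · intro a _
      exact Nat.count_nth_of_infinite hx a
    · intro a ha
      exact Nat.nth_count (Finset.mem_filter.1 ha).2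
    · intro a _
      rfl
  rw [hbij, Finset.prod_congr rfl (fun n _ => r3_eq n), prod_zpow_two]
  congr 1
  rw [Finset.sum_filter]
  rfl

lemma VV_div3 (k : ℕ) (x : ℕ → Bool) : |VV k x - VV (3*(k/3)) x| ≤ 4 := by
  have h3 : 3*(k/3) ≤ k := Nat.mul_div_le k 3
  have hsplit : VV k x - VV (3*(k/3)) x = ∑ n ∈ Finset.Ico (3*(k/3)) k, gg n x := by
    rw [VV, VV, ← Finset.sum_range_add_sum_Ico (fun n => gg n x) h3]
    ring
  rw [hsplit]
  have hcard : (Finset.Ico (3*(k/3)) k).card ≤ 2 := by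
    rw [Nat.card_Ico]
    omega
  calc |∑ n ∈ Finset.Ico (3*(k/3)) k, gg n x|
      ≤ ∑ n ∈ Finset.Ico (3*(k/3)) k, |gg n x| := Finset.abs_sum_le_sum_abs _ _
    _ ≤ (Finset.Ico (3*(k/3)) k).card • (2:ℝ) :=
        Finset.sum_le_card_nsmul _ _ 2 fun n _ => gg_bdd n x
    _ ≤ 4 := by
        rw [nsmul_eq_mul]
        have : ((Finset.Ico (3*(k/3)) k).card : ℝ) ≤ 2 := by exact_mod_cast hcard
        nlinarith

lemma count_ge (x : ℕ → Bool) (hx : {n : ℕ | x n = true}.Infinite) (j : ℕ) {n : ℕ}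
    (hn : Nat.nth (fun n => x n = true) j + 1 ≤ n) :
    j + 1 ≤ Nat.count (fun n => x n = true) n := by
  have h1 : Nat.count (fun n => x n = true) (Nat.nth (fun n => x n = true) j + 1) = j + 1 := by
    rw [Nat.count_succ, Nat.count_nth_of_infinite hx,
      if_pos (Nat.nth_mem_of_infinite hx j)]
  rw [← h1]
  exact Nat.count_monotone _ hn

lemma exists_big (x : ℕ → Bool) (hx : {n : ℕ | x n = true}.Infinite)
    (hA : ¬BddAbove (Set.range fun k => VV k x)) (j M : ℕ) :
    ∃ k, j ≤ k ∧ (2:ℝ≥0∞)^(M:ℤ) ≤ cocycle3 k x := by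
  classical
  set N₀ : ℕ := Nat.nth (fun n => x n = true) j + 1 with hN₀def
  obtain ⟨y, ⟨k, rfl⟩, hlt⟩ := not_bddAbove_iff.1 hA
    (max ((M:ℝ)+4) ((Finset.range (3*N₀+1)).sup' ⟨0, Finset.mem_range.2 (by omega)⟩
      fun i => VV i x))
  have hk3 : 3*N₀ + 1 ≤ k := by
    by_contra h
    push_neg at h
    have h1 : VV k x ≤ (Finset.range (3*N₀+1)).sup'
        ⟨0, Finset.mem_range.2 (by omega)⟩ (fun i => VV i x) :=
      Finset.le_sup' (fun i => VV i x) (Finset.mem_range.2 (by omega))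
    have h2 := le_max_right ((M:ℝ)+4) ((Finset.range (3*N₀+1)).sup'
        ⟨0, Finset.mem_range.2 (by omega)⟩ fun i => VV i x)
    linarith
  set N : ℕ := k / 3 with hNdef
  have hN₀ : N₀ ≤ N := by
    rw [hNdef]
    omega
  have hVN : (M:ℝ) ≤ VV (3*N) x := by
    have h1 := VV_div3 k x
    have h2 : (M:ℝ)+4 < VV k x := lt_of_le_of_lt (le_max_left _ _) hlt
    rw [abs_le] at h1
    rw [hNdef]
    linarith [h1.1, h1.2]
  have hD : (M:ℤ) ≤ DD N x := by
    have h1 := VV_checkpoint N x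
    rw [h1] at hVN
    exact_mod_cast hVN
  refine ⟨Nat.count (fun n => x n = true) (3*N), ?_, ?_⟩
  · have := count_ge x hx j (show N₀ ≤ 3*N by omega)
    omega
  · rw [cocycle_checkpoint x hx N]
    exact ENNReal.zpow_le_of_le one_le_two hD

lemma exists_small (x : ℕ → Bool) (hx : {n : ℕ | x n = true}.Infinite)
    (hB : ¬BddBelow (Set.range fun k => VV k x)) (j M : ℕ) :
    ∃ k, j ≤ k ∧ cocycle3 k x ≤ (2:ℝ≥0∞)^(-(M:ℤ)) := by
  classical
  set N₀ : ℕ := Nat.nth (fun n => x n = true) j + 1 with hN₀def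
  obtain ⟨y, ⟨k, rfl⟩, hlt⟩ := not_bddBelow_iff.1 hB
    (min (-(M:ℝ)-4) ((Finset.range (3*N₀+1)).inf' ⟨0, Finset.mem_range.2 (by omega)⟩
      fun i => VV i x))
  have hk3 : 3*N₀ + 1 ≤ k := by
    by_contra h
    push_neg at h
    have h1 : (Finset.range (3*N₀+1)).inf'
        ⟨0, Finset.mem_range.2 (by omega)⟩ (fun i => VV i x) ≤ VV k x :=
      Finset.inf'_le (fun i => VV i x) (Finset.mem_range.2 (by omega))
    have h2 := min_le_right (-(M:ℝ)-4) ((Finset.range (3*N₀+1)).inf'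
        ⟨0, Finset.mem_range.2 (by omega)⟩ fun i => VV i x)
    linarith
  set N : ℕ := k / 3 with hNdef
  have hN₀ : N₀ ≤ N := by
    rw [hNdef]
    omega
  have hVN : VV (3*N) x ≤ -(M:ℝ) := by
    have h1 := VV_div3 k x
    have h2 : VV k x < -(M:ℝ)-4 := lt_of_lt_of_le hlt (min_le_left _ _)
    rw [abs_le] at h1
    rw [hNdef]
    linarith [h1.1, h1.2]
  have hD : DD N x ≤ -(M:ℤ) := by
    have h1 := VV_checkpoint N x
    rw [h1] at hVN
    exact_mod_cast hVN
  refine ⟨Nat.count (fun n => x n = true) (3*N), ?_, ?_⟩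
  · have := count_ge x hx j (show N₀ ≤ 3*N by omega)
    omega
  · rw [cocycle_checkpoint x hx N]
    exact ENNReal.zpow_le_of_le one_le_two hD

lemma nat_le_two_zpow (K : ℕ) : (K : ℝ≥0∞) ≤ (2:ℝ≥0∞)^(K:ℤ) := by
  rw [zpow_natCast]
  have h1 : (K:ℕ) ≤ 2^K := (Nat.lt_two_pow_self (n := K)).le
  calc (K : ℝ≥0∞) ≤ ((2^K : ℕ) : ℝ≥0∞) := by exact_mod_cast h1
    _ = (2:ℝ≥0∞)^K := by push_cast; ring

lemma limsup_top (x : ℕ → Bool) (hx : {n : ℕ | x n = true}.Infinite)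
    (hA : ¬BddAbove (Set.range fun k => VV k x)) :
    Filter.limsup (fun k => cocycle3 k x) atTop = ⊤ := by
  rw [limsup_eq_iInf_iSup_of_nat]
  rw [iInf_eq_top]
  intro j
  have hM : ∀ M : ℕ, (2:ℝ≥0∞)^(M:ℤ) ≤ ⨆ i, ⨆ (_ : j ≤ i), cocycle3 i x := by
    intro M
    obtain ⟨k, hjk, hk⟩ := exists_big x hx hA j M
    exact le_trans hk (le_iSup₂_of_le k hjk le_rfl)
  by_contra hne
  obtain ⟨K, hK⟩ := ENNReal.exists_nat_gt hne
  exact lt_irrefl _ (lt_of_lt_of_le (lt_of_lt_of_le hK (nat_le_two_zpow K)) (hM K))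

lemma liminf_zero (x : ℕ → Bool) (hx : {n : ℕ | x n = true}.Infinite)
    (hB : ¬BddBelow (Set.range fun k => VV k x)) :
    Filter.liminf (fun k => cocycle3 k x) atTop = 0 := by
  rw [liminf_eq_iSup_iInf_of_nat]
  refine le_antisymm (iSup_le fun j => ?_) zero_le
  have hM : ∀ M : ℕ, (⨅ i, ⨅ (_ : j ≤ i), cocycle3 i x) ≤ (2:ℝ≥0∞)^(-(M:ℤ)) := by
    intro M
    obtain ⟨k, hjk, hk⟩ := exists_small x hx hB j M
    exact le_trans (iInf₂_le_of_le k hjk le_rfl) hk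
  by_contra hpos
  rw [not_le] at hpos
  have hne : (⨅ i, ⨅ (_ : j ≤ i), cocycle3 i x)⁻¹ ≠ ⊤ := ENNReal.inv_ne_top.2 hpos.ne'
  obtain ⟨K, hK⟩ := ENNReal.exists_nat_gt hne
  have h1 : (2:ℝ≥0∞)^(-(K:ℤ)) = ((2:ℝ≥0∞)^(K:ℤ))⁻¹ :=
    ENNReal.zpow_neg 2 K
  have h2 : (2:ℝ≥0∞)^(K:ℤ) ≤ (⨅ i, ⨅ (_ : j ≤ i), cocycle3 i x)⁻¹ := by
    rw [← inv_inv ((2:ℝ≥0∞)^(K:ℤ))]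
    exact ENNReal.inv_le_inv.2 (h1 ▸ hM K)
  exact lt_irrefl _ (lt_of_lt_of_le (lt_of_lt_of_le hK (nat_le_two_zpow K)) h2)

end

end Period3Aux

/-- for the period-3 product measure (`m n {1} = 2/3` when `3 ∣ n` and `1/3`
otherwise), almost every `x` has infinitely many `1`s and the cocycle sequence along the forward
geodesic of the least-deletion map oscillates: its limsup is `∞` and its liminf is `0`. -/
theorem period3_cocycle_oscillates
    (m : ℕ → Measure Bool) (hprob : ∀ n, IsProbabilityMeasure (m n))
    (hm : ∀ n, m n {true} = if 3 ∣ n then (2 : ℝ≥0∞) / 3 else 1 / 3)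
    (μ : Measure (ℕ → Bool)) (hμ : IsProductMeasure μ m) :
    ∀ᵐ x ∂μ, {n : ℕ | x n = true}.Infinite ∧
      Filter.limsup (fun k => cocycle3 k x) atTop = ⊤ ∧
      Filter.liminf (fun k => cocycle3 k x) atTop = 0 := by
  filter_upwards [Period3Aux.ae_infinite hprob hm hμ, Period3Aux.ae_unbounded hμ hm]
    with x hxinf hxbdd
  exact ⟨hxinf, Period3Aux.limsup_top x hxinf hxbdd.1, Period3Aux.liminf_zero x hxinf hxbdd.2⟩
end

section
/- Fix an integer j > 2 and let μ = ⨂_{n∈ℕ} m_n be the product probability measure on 2^ℕ with m_n({1}) = (j−1)/j if j divides n and m_n({1}) = 1/j otherwise. For x ∈ 2^ℕ with infinitely many 1s, let n_0(x) < n_1(x) < ⋯ enumerate {n : x(n) = 1}, let r(n) = 1/(j−1) if j ∣ n and r(n) = j−1 otherwise, and set C_k(x) = ∏_{i=0}^{k−1} r(n_i(x)). Then for μ-almost every x ∈ 2^ℕ, x has infinitely many 1s and limsup_{k→∞} C_k(x) = +∞ and liminf_{k→∞} C_k(x) = 0. -/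
open MeasureTheory Filter Set ENNReal

/-- The multiplicative jump `m n {0} / m n {1}` of the period-`j` measure:
`1/(j-1)` if `j ∣ n`, and `j-1` otherwise. -/
noncomputable def rPeriod (j n : ℕ) : ℝ≥0∞ :=
  if j ∣ n then ((j : ℝ≥0∞) - 1)⁻¹ else (j : ℝ≥0∞) - 1

noncomputable def meanval (j m : ℕ) : ℝ := if j ∣ m then (1 - (j:ℝ))/j else 1/(j:ℝ)

noncomputable def zval (j m : ℕ) (x : ℕ → Bool) : ℝ :=
  if x m = true then (if j ∣ m then -1 else 1) else 0

noncomputable def Amart (j : ℕ) (n : ℕ) (x : ℕ → Bool) : ℝ :=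
  ∑ m ∈ Finset.range n, (zval j m x - meanval j m)

def SZ (j : ℕ) (x : ℕ → Bool) (n : ℕ) : ℤ :=
  ∑ m ∈ Finset.range n, (if x m = true then (if j ∣ m then (-1:ℤ) else 1) else 0)

lemma sum_meanval {j : ℕ} (hj : 2 < j) (n : ℕ) :
    ∑ m ∈ Finset.range n, meanval j m
      = ((n % j : ℕ) : ℝ)/j - (if j ∣ n then 0 else 1) := by
  have hj0 : (0:ℕ) < j := by omega
  have hjR : (0:ℝ) < j := by exact_mod_cast hj0
  induction n with
  | zero => simp
  | succ n ih =>
    have hmod : (n + 1) % j = (n % j + 1) % j := by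
      conv_lhs => rw [Nat.add_mod, Nat.mod_eq_of_lt (show 1 < j by omega)]
    have hr : n % j < j := Nat.mod_lt _ hj0
    rw [Finset.sum_range_succ, ih, meanval]
    by_cases h : j ∣ n
    · have h0 : n % j = 0 := Nat.dvd_iff_mod_eq_zero.1 h
      have hmod1 : (n + 1) % j = 1 := by
        rw [hmod, h0, Nat.mod_eq_of_lt (show 1 < j by omega)]
      have hnd : ¬ j ∣ (n + 1) := fun hc => by
        have := Nat.dvd_iff_mod_eq_zero.1 hc; omega
      rw [if_pos h, if_pos h, if_neg hnd, hmod1, h0]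
      push_cast
      field_simp
      ring
    · by_cases h1 : j ∣ (n + 1)
      · have h2 : (n + 1) % j = 0 := Nat.dvd_iff_mod_eq_zero.1 h1
        have h3 : j ∣ (n % j + 1) := Nat.dvd_iff_mod_eq_zero.2 (hmod ▸ h2)
        have h4 : n % j + 1 = j :=
          Nat.le_antisymm (by omega) (Nat.le_of_dvd (by omega) h3)
        have h5 : ((n % j : ℕ) : ℝ) = (j : ℝ) - 1 := by
          have h6 : n % j = j - 1 := by omega
          rw [h6]; push_cast [Nat.cast_sub (show 1 ≤ j by omega)]; ring
        rw [if_neg h, if_pos h1, if_neg h, h2, h5]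
        push_cast
        field_simp
        ring
      · have h4 : n % j + 1 < j := by
          rcases Nat.lt_or_ge (n % j + 1) j with h' | h'
          · exact h'
          · exfalso
            have h6 : n % j + 1 = j := by omega
            exact h1 (Nat.dvd_iff_mod_eq_zero.2 (by rw [hmod, h6, Nat.mod_self]))
        have h5 : (n + 1) % j = n % j + 1 := by rw [hmod, Nat.mod_eq_of_lt h4]
        rw [if_neg h, if_neg h1, if_neg h, h5]
        push_cast
        field_simp
        ring

lemma abs_sum_meanval_le {j : ℕ} (hj : 2 < j) (n : ℕ) :
    |∑ m ∈ Finset.range n, meanval j m| ≤ 1 := by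
  rw [sum_meanval hj]
  have hjR : (0:ℝ) < j := by
    have : (0:ℕ) < j := by omega
    exact_mod_cast this
  have h1 : (0:ℝ) ≤ ((n % j : ℕ) : ℝ) / j := by positivity
  have h2 : ((n % j : ℕ) : ℝ) / j ≤ 1 := by
    rw [div_le_one hjR]
    have : n % j ≤ j := (Nat.mod_lt _ (by omega)).le
    exact_mod_cast this
  split_ifs <;> rw [abs_le] <;> constructor <;> linarith

lemma Amart_eq {j : ℕ} (x : ℕ → Bool) (n : ℕ) :
    Amart j n x = ((SZ j x n : ℤ) : ℝ) - ∑ m ∈ Finset.range n, meanval j m := by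
  unfold Amart SZ
  rw [Finset.sum_sub_distrib]
  congr 1
  rw [Int.cast_sum]
  refine Finset.sum_congr rfl fun m _ => ?_
  unfold zval
  split_ifs <;> norm_num


lemma pointwise_osc {j : ℕ} (hj : 2 < j) (x : ℕ → Bool)
    (hup : ¬ BddAbove (Set.range fun n => Amart j n x))
    (hdown : ¬ BddBelow (Set.range fun n => Amart j n x)) :
    {n : ℕ | x n = true}.Infinite ∧
      Filter.limsup
        (fun k => ∏ i ∈ Finset.range k, rPeriod j (Nat.nth (fun n => x n = true) i)) atTop = ⊤ ∧
      Filter.liminf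
        (fun k => ∏ i ∈ Finset.range k, rPeriod j (Nat.nth (fun n => x n = true) i)) atTop
        = 0 := by
  set p : ℕ → Prop := fun n => x n = true with hp
  have hSZup : ∀ B : ℤ, ∃ n, B < SZ j x n := by
    intro B
    rw [not_bddAbove_iff] at hup
    obtain ⟨y, ⟨n, rfl⟩, hy⟩ := hup ((B : ℝ) + 1)
    refine ⟨n, ?_⟩
    have h1 := abs_le.1 (abs_sum_meanval_le hj (j := j) n)
    have hy2 : (B : ℝ) + 1 < Amart j n x := hy
    rw [Amart_eq] at hy2
    have : (B : ℝ) < ((SZ j x n : ℤ) : ℝ) := by linarith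
    exact_mod_cast this
  have hSZdown : ∀ B : ℤ, ∃ n, SZ j x n < B := by
    intro B
    rw [not_bddBelow_iff] at hdown
    obtain ⟨y, ⟨n, rfl⟩, hy⟩ := hdown ((B : ℝ) - 1)
    refine ⟨n, ?_⟩
    have h1 := abs_le.1 (abs_sum_meanval_le hj (j := j) n)
    have hy2 : Amart j n x < (B : ℝ) - 1 := hy
    rw [Amart_eq] at hy2
    have : ((SZ j x n : ℤ) : ℝ) < (B : ℝ) := by linarith
    exact_mod_cast this
  have hconst : ∀ N, (∀ k, p k → k < N) → ∀ n, N ≤ n → SZ j x n = SZ j x N := by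
    intro N hN n hn
    refine (Finset.sum_subset (Finset.range_subset_range.2 hn) fun i hi hni => ?_).symm
    have hxi : ¬ (x i = true) := by
      intro hc
      exact absurd (hN i hc) (by simp only [Finset.mem_range] at hni; omega)
    rw [if_neg hxi]
  have hinf : {n : ℕ | x n = true}.Infinite := by
    by_contra hfin
    rw [Set.not_infinite] at hfin
    obtain ⟨N, hN⟩ := hfin.bddAbove
    have hb : ∀ k, p k → k < N + 1 := fun k hk => Nat.lt_succ_of_le (hN hk)
    set T := (Finset.range (N + 2)).image (SZ j x) with hT
    have hTne : T.Nonempty := ⟨SZ j x 0, Finset.mem_image.2 ⟨0, by simp, rfl⟩⟩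
    obtain ⟨n, hn⟩ := hSZup (T.max' hTne)
    have hle : SZ j x n ≤ T.max' hTne := by
      rcases lt_or_ge n (N + 2) with h | h
      · exact Finset.le_max' _ _ (Finset.mem_image.2 ⟨n, Finset.mem_range.2 h, rfl⟩)
      · rw [hconst (N + 1) hb n (by omega)]
        exact Finset.le_max' _ _ (Finset.mem_image.2 ⟨N + 1, by simp, rfl⟩)
    omega
  have hpinf : (setOf p).Infinite := hinf
  set TT : ℕ → ℤ :=
    fun k => ∑ i ∈ Finset.range k, (if j ∣ Nat.nth p i then (-1 : ℤ) else 1) with hTT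
  have hSZT : ∀ n, SZ j x n = TT (Nat.count p n) := by
    intro n
    induction n with
    | zero => simp [SZ, hTT]
    | succ n ih =>
      rw [show SZ j x (n + 1)
          = SZ j x n + (if x n = true then (if j ∣ n then (-1 : ℤ) else 1) else 0) from
        Finset.sum_range_succ _ _, Nat.count_succ, ih]
      by_cases h : p n
      · rw [if_pos h, if_pos h, show TT (Nat.count p n + 1)
            = TT (Nat.count p n) + (if j ∣ Nat.nth p (Nat.count p n) then (-1 : ℤ) else 1) from
          Finset.sum_range_succ _ _, Nat.nth_count h]
      · rw [if_neg h, if_neg h, add_zero, add_zero]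
  have hfreq_up : ∀ N : ℕ, ∀ K : ℤ, ∃ k, N ≤ k ∧ K < TT k := by
    intro N K
    set m₀ := Nat.nth p N + 1 with hm₀
    have hc0 : Nat.count p m₀ = N + 1 := by
      rw [hm₀, Nat.count_succ, if_pos (Nat.nth_mem_of_infinite hpinf N),
        Nat.count_nth_of_infinite hpinf]
    set T0 := (Finset.range m₀).image (SZ j x) with hT0
    have hT0ne : T0.Nonempty :=
      ⟨SZ j x 0, Finset.mem_image.2 ⟨0, Finset.mem_range.2 (by omega), rfl⟩⟩
    obtain ⟨n, hn⟩ := hSZup (max K (T0.max' hT0ne))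
    have hnm : m₀ ≤ n := by
      by_contra h
      have h1 : SZ j x n ≤ T0.max' hT0ne :=
        Finset.le_max' _ _ (Finset.mem_image.2 ⟨n, Finset.mem_range.2 (by omega), rfl⟩)
      have h2 := le_max_right K (T0.max' hT0ne)
      omega
    refine ⟨Nat.count p n, ?_, ?_⟩
    · have := Nat.count_monotone p hnm
      omega
    · rw [← hSZT]
      have := le_max_left K (T0.max' hT0ne)
      omega
  have hfreq_down : ∀ N : ℕ, ∀ K : ℤ, ∃ k, N ≤ k ∧ TT k < K := by
    intro N K
    set m₀ := Nat.nth p N + 1 with hm₀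
    have hc0 : Nat.count p m₀ = N + 1 := by
      rw [hm₀, Nat.count_succ, if_pos (Nat.nth_mem_of_infinite hpinf N),
        Nat.count_nth_of_infinite hpinf]
    set T0 := (Finset.range m₀).image (SZ j x) with hT0
    have hT0ne : T0.Nonempty :=
      ⟨SZ j x 0, Finset.mem_image.2 ⟨0, Finset.mem_range.2 (by omega), rfl⟩⟩
    obtain ⟨n, hn⟩ := hSZdown (min K (T0.min' hT0ne))
    have hnm : m₀ ≤ n := by
      by_contra h
      have h1 : T0.min' hT0ne ≤ SZ j x n :=
        Finset.min'_le _ _ (Finset.mem_image.2 ⟨n, Finset.mem_range.2 (by omega), rfl⟩)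
      have h2 := min_le_right K (T0.min' hT0ne)
      omega
    refine ⟨Nat.count p n, ?_, ?_⟩
    · have := Nat.count_monotone p hnm
      omega
    · rw [← hSZT]
      have := min_le_left K (T0.min' hT0ne)
      omega
  set b : ℝ≥0∞ := (j : ℝ≥0∞) - 1 with hb
  have hjtop : (j : ℝ≥0∞) ≠ ⊤ := ENNReal.natCast_ne_top j
  have hb2 : 2 ≤ b := by
    have h3 : (3 : ℝ≥0∞) ≤ (j : ℝ≥0∞) := by
      have : ((3 : ℕ) : ℝ≥0∞) ≤ (j : ℝ≥0∞) := Nat.cast_le.2 (by omega)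
      simpa using this
    calc (2 : ℝ≥0∞) = 3 - 1 :=
          (ENNReal.sub_eq_of_eq_add ENNReal.one_ne_top
            (by norm_num : (3 : ℝ≥0∞) = 2 + 1)).symm
      _ ≤ b := tsub_le_tsub_right h3 1
  have hb0 : b ≠ 0 := by
    intro h
    rw [h] at hb2
    exact absurd hb2 (by norm_num)
  have hbtop : b ≠ ⊤ := ne_top_of_le_ne_top hjtop tsub_le_self
  have hb1 : (1 : ℝ≥0∞) ≤ b := le_trans (by norm_num) hb2
  have hrP : ∀ nn, rPeriod j nn = b ^ (if j ∣ nn then (-1 : ℤ) else 1) := by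
    intro nn
    unfold rPeriod
    split_ifs
    · rw [show ((-1 : ℤ)) = -(1 : ℤ) from rfl, ENNReal.zpow_neg, zpow_one]
    · exact (zpow_one b).symm
  have hCeq : ∀ k, (∏ i ∈ Finset.range k, rPeriod j (Nat.nth p i)) = b ^ TT k := by
    intro k
    induction k with
    | zero => simp [hTT]
    | succ k ih =>
      rw [Finset.prod_range_succ, ih, hrP,
        show TT (k + 1) = TT k + (if j ∣ Nat.nth p k then (-1 : ℤ) else 1) from
          Finset.sum_range_succ _ _,
        ENNReal.zpow_add hb0 hbtop]
  have h2pow : ∀ K : ℕ, ((K : ℝ≥0∞)) ≤ 2 ^ K := by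
    intro K
    have h1 : (K : ℕ) ≤ 2 ^ K := (Nat.lt_two_pow_self (n := K)).le
    calc (K : ℝ≥0∞) ≤ ((2 ^ K : ℕ) : ℝ≥0∞) := Nat.cast_le.2 h1
      _ = 2 ^ K := by push_cast; ring
  have hpow_le : ∀ K : ℕ, (2 : ℝ≥0∞) ^ K ≤ b ^ K := fun K => pow_le_pow_left₀ zero_le hb2 K
  have hlimsup : Filter.limsup (fun k => b ^ TT k) atTop = ⊤ := by
    by_contra h
    obtain ⟨K, hK⟩ := ENNReal.exists_nat_gt h
    have hfreq : ∃ᶠ k in atTop, b ^ ((K : ℕ) : ℤ) ≤ b ^ TT k := by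
      rw [frequently_atTop]
      intro N
      obtain ⟨k, hk1, hk2⟩ := hfreq_up N ((K : ℕ) : ℤ)
      exact ⟨k, hk1, ENNReal.zpow_le_of_le hb1 hk2.le⟩
    have h1 : b ^ ((K : ℕ) : ℤ) ≤ Filter.limsup (fun k => b ^ TT k) atTop :=
      le_limsup_of_frequently_le' hfreq
    have h2 : (K : ℝ≥0∞) ≤ b ^ ((K : ℕ) : ℤ) := by
      rw [zpow_natCast]
      exact (h2pow K).trans (hpow_le K)
    exact absurd hK (not_lt.2 ((h2.trans h1)))
  have hliminf : Filter.liminf (fun k => b ^ TT k) atTop = 0 := by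
    by_contra h
    obtain ⟨K, hK⟩ := ENNReal.exists_inv_two_pow_lt h
    have hfreq : ∃ᶠ k in atTop, b ^ TT k ≤ b ^ (-(K : ℤ)) := by
      rw [frequently_atTop]
      intro N
      obtain ⟨k, hk1, hk2⟩ := hfreq_down N (-(K : ℤ))
      exact ⟨k, hk1, ENNReal.zpow_le_of_le hb1 hk2.le⟩
    have h1 : Filter.liminf (fun k => b ^ TT k) atTop ≤ b ^ (-(K : ℤ)) :=
      liminf_le_of_frequently_le' hfreq
    have h2 : b ^ (-(K : ℤ)) ≤ 2⁻¹ ^ K := by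
      rw [ENNReal.zpow_neg, zpow_natCast, ENNReal.inv_pow]
      exact pow_le_pow_left₀ zero_le (ENNReal.inv_le_inv.2 hb2) K
    exact absurd (h1.trans h2) (not_le.2 hK)
  have hfun : (fun k => ∏ i ∈ Finset.range k, rPeriod j (Nat.nth p i))
      = fun k => b ^ TT k := funext hCeq
  exact ⟨hinf, by rw [hfun]; exact hlimsup, by rw [hfun]; exact hliminf⟩

def cylSets (n : ℕ) : Set (Set (ℕ → Bool)) :=
  {S | ∃ s : Finset ℕ, (∀ i ∈ s, i < n) ∧ ∃ a : ℕ → Bool, S = {x | ∀ i ∈ s, x i = a i}}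

lemma measurableSet_cyl (s : Finset ℕ) (a : ℕ → Bool) :
    MeasurableSet {x : ℕ → Bool | ∀ i ∈ s, x i = a i} := by
  have h : {x : ℕ → Bool | ∀ i ∈ s, x i = a i}
      = ⋂ i ∈ (s : Set ℕ), (fun x : ℕ → Bool => x i) ⁻¹' {a i} := by
    ext x; simp
  rw [h]
  exact MeasurableSet.biInter s.countable_toSet
    (fun i _ => (measurable_pi_apply i) (measurableSet_singleton _))

noncomputable def filt : Filtration ℕ (inferInstance : MeasurableSpace (ℕ → Bool)) where
  seq n := MeasurableSpace.generateFrom (cylSets n)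
  mono' := fun n n' h => MeasurableSpace.generateFrom_mono (fun S hS => by
    obtain ⟨s, hs, a, rfl⟩ := hS
    exact ⟨s, fun i hi => lt_of_lt_of_le (hs i hi) h, a, rfl⟩)
  le' := fun n => MeasurableSpace.generateFrom_le (fun S hS => by
    obtain ⟨s, hs, a, rfl⟩ := hS
    exact measurableSet_cyl s a)

lemma eval_measurable_filt {i n : ℕ} (h : i < n) :
    Measurable[filt n] (fun x : ℕ → Bool => x i) := by
  refine @measurable_to_countable' Bool (ℕ → Bool) _ _ (filt n) _ fun b => ?_
  apply MeasurableSpace.measurableSet_generateFrom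
  exact ⟨{i}, by simp [h], fun _ => b, by ext x; simp⟩

lemma zval_measurable_filt {j i n : ℕ} (h : i < n) :
    Measurable[filt n] (zval j i) := by
  have hz : zval j i = (fun b : Bool => if b = true then (if j ∣ i then (-1:ℝ) else 1) else 0)
      ∘ (fun x : ℕ → Bool => x i) := rfl
  rw [hz]
  exact Measurable.of_discrete.comp (eval_measurable_filt h)

lemma Amart_adapted (j : ℕ) : StronglyAdapted filt (fun n => Amart j n) := by
  intro n
  apply Measurable.stronglyMeasurable
  apply Finset.measurable_sum
  intro i hi
  exact ((zval_measurable_filt (Finset.mem_range.1 hi)).sub measurable_const)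

lemma abs_meanval_le {j : ℕ} (hj : 2 < j) (i : ℕ) : |meanval j i| ≤ 1 := by
  have hjR : (0:ℝ) < j := by exact_mod_cast (by omega : (0:ℕ) < j)
  have hj3 : (3:ℝ) ≤ j := by exact_mod_cast (by omega : (3:ℕ) ≤ j)
  unfold meanval
  split_ifs
  · rw [abs_div, abs_of_pos hjR, abs_of_nonpos (by linarith), div_le_one hjR]
    linarith
  · rw [abs_div, abs_of_pos hjR, abs_one, div_le_one hjR]
    linarith

lemma abs_zval_le {j i : ℕ} (x : ℕ → Bool) : |zval j i x| ≤ 1 := by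
  unfold zval
  split_ifs <;> norm_num

lemma zval_measurable (j i : ℕ) : Measurable (zval j i) := by
  have hz : zval j i = (fun b : Bool => if b = true then (if j ∣ i then (-1:ℝ) else 1) else 0)
      ∘ (fun x : ℕ → Bool => x i) := rfl
  rw [hz]
  exact Measurable.of_discrete.comp (measurable_pi_apply i)

lemma term_integrable {j : ℕ} (hj : 2 < j) {μ : Measure (ℕ → Bool)} [IsProbabilityMeasure μ]
    (i : ℕ) : Integrable (fun x => zval j i x - meanval j i) μ := by
  refine (integrable_const (2:ℝ)).mono' ?_ ?_
  · exact ((zval_measurable j i).sub measurable_const).aestronglyMeasurable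
  · refine ae_of_all _ fun x => ?_
    have h1 := abs_zval_le (j := j) (i := i) x
    have h2 := abs_meanval_le hj i
    rw [Real.norm_eq_abs]
    calc |zval j i x - meanval j i| ≤ |zval j i x| + |meanval j i| := abs_sub _ _
      _ ≤ 2 := by linarith

lemma Amart_integrable {j : ℕ} (hj : 2 < j) {μ : Measure (ℕ → Bool)} [IsProbabilityMeasure μ]
    (n : ℕ) : Integrable (Amart j n) μ := by
  have h : Amart j n = fun x => ∑ i ∈ Finset.range n, (zval j i x - meanval j i) := rfl
  rw [h]
  exact integrable_finset_sum _ (fun i _ => term_integrable hj i)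

lemma isProbability {μ : Measure (ℕ → Bool)} {m : ℕ → Measure Bool}
    (hμ : IsProductMeasure μ m) : IsProbabilityMeasure μ :=
  ⟨by simpa using hμ ∅ (fun _ => true)⟩

lemma marginal {μ : Measure (ℕ → Bool)} {m : ℕ → Measure Bool}
    (hμ : IsProductMeasure μ m) (n : ℕ) (b : Bool) :
    μ {x : ℕ → Bool | x n = b} = m n {b} := by
  have h := hμ {n} (fun _ => b)
  simpa using h

lemma indep_coord {μ : Measure (ℕ → Bool)} {m : ℕ → Measure Bool}
    (hμ : IsProductMeasure μ m) (n : ℕ) :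
    ProbabilityTheory.Indep
      (MeasurableSpace.comap (fun x : ℕ → Bool => x n) inferInstance) (filt n) μ := by
  haveI := isProbability hμ
  set p1 : Set (Set (ℕ → Bool)) := {S | ∃ b : Bool, S = {x | x n = b}} with hp1def
  have hgen1 : MeasurableSpace.comap (fun x : ℕ → Bool => x n) inferInstance
      = MeasurableSpace.generateFrom p1 := by
    apply le_antisymm
    · have hmeas : Measurable[MeasurableSpace.generateFrom p1] (fun x : ℕ → Bool => x n) := by
        refine @measurable_to_countable' Bool (ℕ → Bool) _ _
          (MeasurableSpace.generateFrom p1) _ fun b => ?_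
        apply MeasurableSpace.measurableSet_generateFrom
        exact ⟨b, by ext x; simp⟩
      exact hmeas.comap_le
    · refine MeasurableSpace.generateFrom_le ?_
      rintro S ⟨b, rfl⟩
      exact ⟨{b}, trivial, by ext x; simp⟩
  have hp1 : IsPiSystem p1 := by
    rintro S ⟨b, rfl⟩ T ⟨b', rfl⟩ hne
    obtain ⟨y, hy1, hy2⟩ := hne
    have hbb : b = b' := by
      rw [mem_setOf_eq] at hy1 hy2
      rw [← hy1, ← hy2]
    subst hbb
    rw [Set.inter_self]
    exact ⟨b, rfl⟩
  have hp2 : IsPiSystem (cylSets n) := by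
    rintro S ⟨s, hs, a, rfl⟩ T ⟨t, ht, a', rfl⟩ hne
    obtain ⟨y, hy1, hy2⟩ := hne
    rw [mem_setOf_eq] at hy1 hy2
    refine ⟨s ∪ t, ?_, fun i => if i ∈ s then a i else a' i, ?_⟩
    · intro i hi
      rcases Finset.mem_union.1 hi with h | h
      · exact hs i h
      · exact ht i h
    · ext z
      simp only [mem_inter_iff, mem_setOf_eq, Finset.mem_union]
      constructor
      · rintro ⟨h1, h2⟩ i hi
        by_cases his : i ∈ s
        · rw [if_pos his]; exact h1 i his
        · rw [if_neg his]; exact h2 i (hi.resolve_left his)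
      · intro h
        constructor
        · intro i hi
          have h3 := h i (Or.inl hi)
          rwa [if_pos hi] at h3
        · intro i hi
          by_cases his : i ∈ s
          · have h3 := h i (Or.inl his)
            rw [if_pos his] at h3
            have h4 : a i = a' i := by rw [← hy1 i his, hy2 i hi]
            exact h3.trans h4
          · have h3 := h i (Or.inr hi)
            rwa [if_neg his] at h3
  have hind : ProbabilityTheory.IndepSets p1 (cylSets n) μ := by
    rw [ProbabilityTheory.IndepSets_iff]
    rintro S T ⟨b, rfl⟩ ⟨s, hs, a, rfl⟩
    have hns : n ∉ s := fun h => lt_irrefl n (hs n h)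
    have e1 : {x : ℕ → Bool | x n = b} ∩ {x | ∀ i ∈ s, x i = a i}
        = {x | ∀ i ∈ insert n s, x i = Function.update a n b i} := by
      ext z
      simp only [mem_inter_iff, mem_setOf_eq, Finset.mem_insert]
      constructor
      · rintro ⟨h1, h2⟩ i hi
        rcases hi with rfl | hi
        · rw [Function.update_self]; exact h1
        · rw [Function.update_of_ne (by rintro rfl; exact hns hi)]
          exact h2 i hi
      · intro h
        constructor
        · have := h n (Or.inl rfl)
          rwa [Function.update_self] at this
        · intro i hi
          have := h i (Or.inr hi)
          rwa [Function.update_of_ne (by rintro rfl; exact hns hi)] at this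
    rw [e1, hμ (insert n s) (Function.update a n b), Finset.prod_insert hns,
      Function.update_self, marginal hμ n b, hμ s a]
    congr 1
    refine Finset.prod_congr rfl fun i hi => ?_
    rw [Function.update_of_ne (by rintro rfl; exact hns hi)]
  exact ProbabilityTheory.IndepSets.indep
    ((measurable_pi_apply n).comap_le) (filt.le n) hp1 hp2 hgen1 rfl hind

lemma zval_integrable {j : ℕ} {μ : Measure (ℕ → Bool)} [IsProbabilityMeasure μ] (i : ℕ) :
    Integrable (zval j i) μ := by
  refine (integrable_const (1:ℝ)).mono' (zval_measurable j i).aestronglyMeasurable ?_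
  exact ae_of_all _ fun x => by rw [Real.norm_eq_abs]; exact abs_zval_le x

lemma integral_zval {j : ℕ} (hj : 2 < j) {μ : Measure (ℕ → Bool)} {m : ℕ → Measure Bool}
    (hm : ∀ n, m n {true} = if j ∣ n then ((j : ℝ≥0∞) - 1) / j else 1 / (j : ℝ≥0∞))
    (hμ : IsProductMeasure μ m) (n : ℕ) :
    ∫ x, zval j n x ∂μ = meanval j n := by
  have hset : MeasurableSet {x : ℕ → Bool | x n = true} := by
    have h : MeasurableSet ((fun x : ℕ → Bool => x n) ⁻¹' {true}) :=
      measurable_pi_apply n (measurableSet_singleton true)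
    simpa [Set.preimage, Set.mem_singleton_iff] using h
  have hzi : zval j n = Set.indicator {x : ℕ → Bool | x n = true}
      (fun _ => (if j ∣ n then (-1:ℝ) else 1)) := by
    ext x
    unfold zval
    by_cases h : x n = true
    · simp [Set.indicator_apply, Set.mem_setOf_eq, h]
    · simp [Set.indicator_apply, Set.mem_setOf_eq, h]
  have hjR : (0:ℝ) < j := by exact_mod_cast (by omega : (0:ℕ) < j)
  have h1 : (1:ℝ≥0∞) ≤ (j:ℝ≥0∞) := by
    have : ((1:ℕ):ℝ≥0∞) ≤ ((j:ℕ):ℝ≥0∞) := Nat.cast_le.2 (by omega)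
    simpa using this
  rw [show (∫ x, zval j n x ∂μ) = ∫ x, (Set.indicator {x : ℕ → Bool | x n = true}
      (fun _ => (if j ∣ n then (-1:ℝ) else 1))) x ∂μ by rw [← hzi],
    integral_indicator_const _ hset, measureReal_def, marginal hμ n true, hm n, meanval]
  split_ifs with h
  · rw [ENNReal.toReal_div, ENNReal.toReal_sub_of_le h1 (ENNReal.natCast_ne_top j)]
    simp only [ENNReal.toReal_natCast, ENNReal.toReal_one, smul_eq_mul]
    ring
  · rw [ENNReal.toReal_div, ENNReal.toReal_one, ENNReal.toReal_natCast, smul_eq_mul]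
    ring

lemma condexp_term {j : ℕ} (hj : 2 < j) {μ : Measure (ℕ → Bool)} {m : ℕ → Measure Bool}
    (hm : ∀ n, m n {true} = if j ∣ n then ((j : ℝ≥0∞) - 1) / j else 1 / (j : ℝ≥0∞))
    (hμ : IsProductMeasure μ m) (n : ℕ) :
    μ[(fun x => zval j n x - meanval j n) | filt n] =ᵐ[μ] fun _ => 0 := by
  haveI := isProbability hμ
  have hle1 : MeasurableSpace.comap (fun x : ℕ → Bool => x n) inferInstance
      ≤ (inferInstance : MeasurableSpace (ℕ → Bool)) := (measurable_pi_apply n).comap_le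
  have hsm : StronglyMeasurable[MeasurableSpace.comap (fun x : ℕ → Bool => x n) inferInstance]
      (fun x => zval j n x - meanval j n) := by
    apply Measurable.stronglyMeasurable
    refine Measurable.sub ?_ measurable_const
    have hz : zval j n = (fun b : Bool => if b = true then (if j ∣ n then (-1:ℝ) else 1) else 0)
        ∘ (fun x : ℕ → Bool => x n) := rfl
    rw [hz]
    exact Measurable.of_discrete.comp (Measurable.of_comap_le le_rfl)
  have h1 := MeasureTheory.condExp_indep_eq hle1 (filt.le n) hsm (indep_coord hμ n)
  refine h1.trans (Filter.EventuallyEq.of_eq ?_)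
  funext z
  rw [integral_sub (zval_integrable n) (integrable_const _), integral_zval hj hm hμ n,
    integral_const, probReal_univ, one_smul, sub_self]

lemma Amart_martingale {j : ℕ} (hj : 2 < j) {μ : Measure (ℕ → Bool)} {m : ℕ → Measure Bool}
    (hm : ∀ n, m n {true} = if j ∣ n then ((j : ℝ≥0∞) - 1) / j else 1 / (j : ℝ≥0∞))
    (hμ : IsProductMeasure μ m) :
    Martingale (fun n => Amart j n) filt μ := by
  haveI := isProbability hμ
  refine martingale_nat (Amart_adapted j) (fun n => Amart_integrable hj n) fun n => ?_
  have hsucc : Amart j (n + 1) = Amart j n + (fun x => zval j n x - meanval j n) :=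
    funext fun x => Finset.sum_range_succ _ _
  have h1 := condExp_add (μ := μ) (m := filt n)
    (Amart_integrable hj n) (term_integrable hj n)
  have h2 : μ[Amart j n | filt n] = Amart j n :=
    condExp_of_stronglyMeasurable (filt.le n) (Amart_adapted j n) (Amart_integrable hj n)
  rw [hsucc]
  refine EventuallyEq.symm (h1.trans ?_)
  rw [h2]
  filter_upwards [condexp_term hj hm hμ n] with x hx
  simp only [Pi.add_apply, hx, add_zero]

lemma diff_lower {j : ℕ} (hj : 2 < j) (x : ℕ → Bool) (i : ℕ) :
    1 / (j:ℝ) ≤ |zval j i x - meanval j i| := by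
  have hjR : (0:ℝ) < j := by exact_mod_cast (by omega : (0:ℕ) < j)
  have hj3 : (3:ℝ) ≤ j := by exact_mod_cast (by omega : (3:ℕ) ≤ j)
  have h0 : (0:ℝ) ≤ 1/(j:ℝ) := by positivity
  have hd : (1:ℝ)/j ≤ ((j:ℝ)-1)/j := by gcongr <;> linarith
  have hnn : (0:ℝ) ≤ ((j:ℝ)-1)/j := div_nonneg (by linarith) hjR.le
  unfold zval meanval
  by_cases h : j ∣ i <;> by_cases h' : x i = true
  · rw [if_pos h, if_pos h', if_pos h,
      show (-1 - (1 - (j:ℝ))/j) = -(1/(j:ℝ)) by field_simp; ring, abs_neg, abs_of_nonneg h0]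
  · rw [if_neg h', if_pos h,
      show ((0:ℝ) - (1 - (j:ℝ))/j) = ((j:ℝ)-1)/j by ring, abs_of_nonneg hnn]
    exact hd
  · rw [if_neg h, if_pos h', if_neg h,
      show ((1:ℝ) - 1/(j:ℝ)) = ((j:ℝ)-1)/j by field_simp, abs_of_nonneg hnn]
    exact hd
  · rw [if_neg h', if_neg h,
      show ((0:ℝ) - 1/(j:ℝ)) = -(1/(j:ℝ)) by ring, abs_neg, abs_of_nonneg h0]

lemma Amart_diff (j i : ℕ) (x : ℕ → Bool) :
    Amart j (i+1) x - Amart j i x = zval j i x - meanval j i := by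
  have h : Amart j (i+1) x = Amart j i x + (zval j i x - meanval j i) :=
    Finset.sum_range_succ _ _
  rw [h]; ring

lemma no_tendsto {j : ℕ} (hj : 2 < j) (x : ℕ → Bool) :
    ¬ ∃ c, Tendsto (fun n => Amart j n x) atTop (nhds c) := by
  rintro ⟨c, hc⟩
  have h1 : Tendsto (fun n => Amart j (n+1) x - Amart j n x) atTop (nhds (c - c)) :=
    (hc.comp (tendsto_add_atTop_nat 1)).sub hc
  rw [sub_self] at h1
  have h2 : Tendsto (fun n => |Amart j (n+1) x - Amart j n x|) atTop (nhds 0) := by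
    have := h1.abs
    rwa [abs_zero] at this
  have h3 : (1:ℝ)/j ≤ 0 := by
    refine ge_of_tendsto h2 (Eventually.of_forall fun n => ?_)
    rw [Amart_diff]
    exact diff_lower hj x n
  have hjR : (0:ℝ) < j := by exact_mod_cast (by omega : (0:ℕ) < j)
  have : (0:ℝ) < 1/j := by positivity
  linarith

lemma ae_unbounded {j : ℕ} (hj : 2 < j) {μ : Measure (ℕ → Bool)} {m : ℕ → Measure Bool}
    (hm : ∀ n, m n {true} = if j ∣ n then ((j : ℝ≥0∞) - 1) / j else 1 / (j : ℝ≥0∞))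
    (hμ : IsProductMeasure μ m) :
    ∀ᵐ x ∂μ, ¬ BddAbove (Set.range fun n => Amart j n x)
      ∧ ¬ BddBelow (Set.range fun n => Amart j n x) := by
  haveI := isProbability hμ
  have hmart := Amart_martingale hj hm hμ
  have hbdd : ∀ᵐ x ∂μ, ∀ i, |Amart j (i+1) x - Amart j i x| ≤ ((2 : NNReal) : ℝ) := by
    refine ae_of_all _ fun x i => ?_
    rw [Amart_diff]
    have h1 := abs_zval_le (j := j) (i := i) x
    have h2 := abs_meanval_le hj i
    calc |zval j i x - meanval j i| ≤ |zval j i x| + |meanval j i| := abs_sub _ _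
      _ ≤ ((2 : NNReal) : ℝ) := by push_cast; linarith
  have hup := hmart.submartingale.bddAbove_iff_exists_tendsto hbdd
  have hiff := hmart.bddAbove_range_iff_bddBelow_range hbdd
  filter_upwards [hup, hiff] with x h1 h2
  have hnc := no_tendsto hj x
  exact ⟨fun hb => hnc (h1.1 hb), fun hb => hnc (h1.1 (h2.2 hb))⟩

/-- fix `j > 2` and take the period-`j` product measure
(`m n {1} = (j-1)/j` when `j ∣ n` and `1/j` otherwise).  Then almost every `x` has infinitely
many `1`s and its cocycle sequence `C k x = ∏_{i<k} rPeriod j (nᵢ x)` along the forward geodesic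
of the least-deletion map oscillates: limsup `= ∞` and liminf `= 0`.  Here
`n₀ x < n₁ x < ⋯` (given by `Nat.nth`) enumerates `{n | x n = 1}`. -/
theorem periodj_cocycle_oscillates
    (j : ℕ) (hj : 2 < j)
    (m : ℕ → Measure Bool) (hprob : ∀ n, IsProbabilityMeasure (m n))
    (hm : ∀ n, m n {true} =
      if j ∣ n then ((j : ℝ≥0∞) - 1) / j else 1 / (j : ℝ≥0∞))
    (μ : Measure (ℕ → Bool)) (hμ : IsProductMeasure μ m) :
    ∀ᵐ x ∂μ, {n : ℕ | x n = true}.Infinite ∧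
      Filter.limsup
        (fun k => ∏ i ∈ Finset.range k, rPeriod j (Nat.nth (fun n => x n = true) i)) atTop = ⊤ ∧
      Filter.liminf
        (fun k => ∏ i ∈ Finset.range k, rPeriod j (Nat.nth (fun n => x n = true) i)) atTop
        = 0 := by
  filter_upwards [ae_unbounded hj hm hμ] with x hx
  exact pointwise_osc hj x hx.1 hx.2
end
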